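/- Fix q ∈ (2,4), α > 0 and μ > 0, and let u ∈ H¹(ℝ⁺, g dx) satisfy ∫₀^∞ u² g dx ≤ μ and Ẽ_{q,α}(u) < 0. Then u(0) ≠ 0 and |u(0)|^{4−q} ≤ (8α/q) μ; equivalently, |u(0)| ≤ ((8α/q) μ)^{1/(4−q)}. -/

import Mathlib

open MeasureTheory Set

/-- The weight `g(x) = 4` for `x ≤ 1` and `g(x) = 4(2x−1)` for `x > 1`. -/
noncomputable def g (x : ℝ) : ℝ := if x ≤ 1 then 4 else 4 * (2 * x - 1)

/-- `u` belongs to the weighted Sobolev space `H¹(ℝ⁺, g dx)` with derivative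
`u'`: it is locally absolutely continuous on `[0,∞)` (primitive of `u'`) and
both `u² g` and `u'² g` are integrable on `(0,∞)`. -/
def InH1g (u u' : ℝ → ℝ) : Prop :=
  IntegrableOn (fun x => (u x) ^ 2 * g x) (Ioi 0) ∧
    IntegrableOn (fun x => (u' x) ^ 2 * g x) (Ioi 0) ∧
    ∀ a b : ℝ, 0 ≤ a → 0 ≤ b → u b - u a = ∫ x in a..b, u' x

/-- The weighted mass `∫₀^∞ u² g dx`. -/
noncomputable def massg (u : ℝ → ℝ) : ℝ := ∫ x in Ioi (0 : ℝ), (u x) ^ 2 * g x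

/-- The reduced energy `Ẽ_{q,α}(u) = (1/2)∫₀^∞ u'² g dx − (α/q)|u(0)|^q`. -/
noncomputable def energyg (q α : ℝ) (u u' : ℝ → ℝ) : ℝ :=
  (1 / 2) * (∫ x in Ioi (0 : ℝ), (u' x) ^ 2 * g x) - (α / q) * |u 0| ^ q

/-- The set of reduced energies over `X_μ = {u : 0 < ∫ u² g ≤ μ}`;
its infimum is `𝓔̃_{q,α}(μ)`. -/
def levelSetg (q α μ : ℝ) : Set ℝ :=
  {E | ∃ u u' : ℝ → ℝ, InH1g u u' ∧ 0 < massg u ∧ massg u ≤ μ ∧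
    E = energyg q α u u'}

lemma g_ge (x : ℝ) : 4 ≤ g x := by
  unfold g; split
  · exact le_refl _
  · rename_i h; push_neg at h; nlinarith

lemma g_pos (x : ℝ) : 0 < g x := lt_of_lt_of_le (by norm_num) (g_ge x)

lemma g_meas : Measurable g := by
  unfold g
  exact Measurable.ite (measurableSet_le measurable_id measurable_const)
    measurable_const (by fun_prop)

/-- measurability of `|v|` from measurability of `v² g`. -/
lemma abs_aemeas {v : ℝ → ℝ} (h : AEMeasurable (fun x => v x ^ 2 * g x) (volume.restrict (Ioi 0))) :
    AEMeasurable (fun x => |v x|) (volume.restrict (Ioi 0)) := by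
  have : (fun x => |v x|) = fun x => Real.sqrt ((v x ^ 2 * g x) / g x) := by
    funext x
    rw [mul_div_assoc, div_self (ne_of_gt (g_pos x)), mul_one, Real.sqrt_sq_eq_abs]
  rw [this]
  exact Real.continuous_sqrt.measurable.comp_aemeasurable (h.div g_meas.aemeasurable)

/-- If `u ∈ H¹(ℝ⁺, g dx)` has weighted mass at most `μ` and negative reduced
energy, then `u(0) ≠ 0` and `|u(0)|^{4−q} ≤ (8α/q)μ`. -/
theorem stmt14 (q α μ : ℝ) (hq : 2 < q) (hq' : q < 4) (hα : 0 < α) (hμ : 0 < μ)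
    (u u' : ℝ → ℝ) (hu : InH1g u u') (hm : massg u ≤ μ)
    (hE : energyg q α u u' < 0) :
    u 0 ≠ 0 ∧ |u 0| ^ (4 - q) ≤ 8 * α / q * μ := by
  obtain ⟨hU, hU', hFTC⟩ := hu
  set A := ∫ x in Ioi (0:ℝ), (u' x) ^ 2 * g x with hAdef
  clear_value A
  have hAnn : 0 ≤ A := by
    rw [hAdef]
    exact setIntegral_nonneg measurableSet_Ioi
      (fun x _ => mul_nonneg (sq_nonneg _) (g_pos x).le)
  have hq0 : (0:ℝ) < q := by linarith
  -- u 0 ≠ 0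
  have hu0 : u 0 ≠ 0 := by
    intro h
    rw [energyg, h, abs_zero, Real.zero_rpow (ne_of_gt hq0)] at hE
    simp only [mul_zero, sub_zero] at hE
    linarith
  have habs : 0 < |u 0| := abs_pos.mpr hu0
  have hAlt : A < 2 * (α / q) * |u 0| ^ q := by
    have h := hE; rw [energyg] at h; linarith
  -- measurability
  have hmu : AEMeasurable (fun x => |u x|) (volume.restrict (Ioi 0)) :=
    abs_aemeas hU.aestronglyMeasurable.aemeasurable
  have hmu' : AEMeasurable (fun x => |u' x|) (volume.restrict (Ioi 0)) :=
    abs_aemeas hU'.aestronglyMeasurable.aemeasurable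
  have hsqm : ∀ v : ℝ → ℝ, AEMeasurable (fun x => |v x|) (volume.restrict (Ioi 0)) →
      AEMeasurable (fun x => v x ^ 2) (volume.restrict (Ioi 0)) := by
    intro v hv
    have : (fun x => v x ^ 2) = fun x => |v x| ^ 2 := by
      funext x; rw [sq_abs]
    rw [this]
    exact hv.pow_const 2
  -- integrability of squares on Ioi 0
  have hsqint : ∀ (v : ℝ → ℝ), IntegrableOn (fun x => v x ^ 2 * g x) (Ioi 0) →
      AEMeasurable (fun x => |v x|) (volume.restrict (Ioi 0)) →
      IntegrableOn (fun x => v x ^ 2) (Ioi 0) := by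
    intro v hint hmeas
    apply Integrable.mono' (hint.const_mul (1/4)) ((hsqm v hmeas).aestronglyMeasurable)
    filter_upwards with x
    have hg := g_ge x
    have : (0:ℝ) ≤ v x ^ 2 := sq_nonneg _
    rw [Real.norm_eq_abs, abs_of_nonneg this]
    nlinarith
  have hPint : IntegrableOn (fun x => u x ^ 2) (Ioi 0) := hsqint u hU hmu
  have hQint : IntegrableOn (fun x => u' x ^ 2) (Ioi 0) := hsqint u' hU' hmu'
  set P2 := ∫ x in Ioi (0:ℝ), u x ^ 2 with hP2def
  set Q2 := ∫ x in Ioi (0:ℝ), u' x ^ 2 with hQ2def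
  clear_value P2 Q2
  have hP2nn : 0 ≤ P2 := by
    rw [hP2def]; exact setIntegral_nonneg measurableSet_Ioi (fun x _ => sq_nonneg _)
  have hQ2nn : 0 ≤ Q2 := by
    rw [hQ2def]; exact setIntegral_nonneg measurableSet_Ioi (fun x _ => sq_nonneg _)
  have h4P2 : 4 * P2 ≤ massg u := by
    rw [massg, hP2def, ← integral_const_mul]
    apply setIntegral_mono_on (hPint.const_mul 4) hU measurableSet_Ioi
    intro x _
    have hg := g_ge x
    nlinarith [sq_nonneg (u x)]
  have h4Q2 : 4 * Q2 ≤ A := by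
    rw [hAdef, hQ2def, ← integral_const_mul]
    apply setIntegral_mono_on (hQint.const_mul 4) hU' measurableSet_Ioi
    intro x _
    have hg := g_ge x
    nlinarith [sq_nonneg (u' x)]
  -- integrability of |v| on Ioc 0 T
  have hIocAbs : ∀ (T : ℝ) (v : ℝ → ℝ), 0 < T →
      AEMeasurable (fun x => |v x|) (volume.restrict (Ioi 0)) →
      IntegrableOn (fun x => v x ^ 2) (Ioi 0) →
      IntegrableOn (fun x => |v x|) (Ioc 0 T) := by
    intro T v hT hmv hint
    have hmeas : AEMeasurable (fun x => |v x|) (volume.restrict (Ioc 0 T)) :=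
      hmv.mono_measure (Measure.restrict_mono Ioc_subset_Ioi_self le_rfl)
    have hintIoc : IntegrableOn (fun x => (v x ^ 2 + 1) / 2) (Ioc 0 T) :=
      ((hint.mono_set Ioc_subset_Ioi_self).add
        (integrableOn_const measure_Ioc_lt_top.ne)).div_const 2
    apply Integrable.mono' hintIoc hmeas.aestronglyMeasurable
    filter_upwards with x
    rw [Real.norm_eq_abs, abs_abs]
    nlinarith [sq_nonneg (|v x| - 1), sq_abs (v x)]
  -- constant integral on Ioc
  have hconst : ∀ (T c : ℝ), 0 < T → (∫ _ in Ioc (0:ℝ) T, c) = T * c := by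
    intro T c hT
    rw [setIntegral_const, Real.volume_real_Ioc_of_le (by linarith), smul_eq_mul]
    ring
  -- AM-GM integral bound
  have hAMGM : ∀ (T : ℝ), 0 < T → ∀ (v : ℝ → ℝ),
      AEMeasurable (fun x => |v x|) (volume.restrict (Ioi 0)) →
      IntegrableOn (fun x => v x ^ 2) (Ioi 0) → ∀ V, (∫ x in Ioi (0:ℝ), v x ^ 2) ≤ V →
      ∀ d : ℝ, 0 < d → (∫ x in Ioc (0:ℝ) T, |v x|) ≤ (d * V + T / d) / 2 := by
    intro T hT v hmv hint V hV d hd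
    have hintsq : IntegrableOn (fun x => v x ^ 2) (Ioc 0 T) :=
      hint.mono_set Ioc_subset_Ioi_self
    have hR : IntegrableOn (fun x => (d * v x ^ 2 + 1 / d) / 2) (Ioc 0 T) :=
      ((hintsq.const_mul d).add
        (integrableOn_const measure_Ioc_lt_top.ne)).div_const 2
    have ptw : ∀ y : ℝ, 0 ≤ y → y ≤ (d * y ^ 2 + 1 / d) / 2 := by
      intro y hy
      rw [le_div_iff₀ (show (0:ℝ) < 2 by norm_num)]
      have key : (y * 2) * d ≤ (d * y ^ 2 + 1 / d) * d := by
        have h1d : (1 / d) * d = 1 := one_div_mul_cancel hd.ne'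
        nlinarith [sq_nonneg (d * y - 1)]
      exact le_of_mul_le_mul_right key hd
    have step1 : (∫ x in Ioc (0:ℝ) T, |v x|) ≤ ∫ x in Ioc (0:ℝ) T, (d * v x ^ 2 + 1 / d) / 2 := by
      apply setIntegral_mono_on (hIocAbs T v hT hmv hint) hR measurableSet_Ioc
      intro x _
      have h := ptw (|v x|) (abs_nonneg _)
      rwa [sq_abs] at h
    have step2 : (∫ x in Ioc (0:ℝ) T, (d * v x ^ 2 + 1 / d) / 2)
        = (d * (∫ x in Ioc (0:ℝ) T, v x ^ 2) + T * (1 / d)) / 2 := by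
      rw [integral_div, integral_add (hintsq.const_mul d)
        (integrableOn_const measure_Ioc_lt_top.ne),
        integral_const_mul, hconst T (1/d) hT]
    have step3 : (∫ x in Ioc (0:ℝ) T, v x ^ 2) ≤ V := by
      refine le_trans ?_ hV
      apply setIntegral_mono_set hint ?_ (HasSubset.Subset.eventuallyLE Ioc_subset_Ioi_self)
      filter_upwards with x using sq_nonneg _
    have : T * (1/d) = T / d := by ring
    rw [step2, this] at step1
    have : d * (∫ x in Ioc (0:ℝ) T, v x ^ 2) ≤ d * V :=
      mul_le_mul_of_nonneg_left step3 hd.le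
    linarith
  -- trace inequality
  have htrace : ∀ T : ℝ, 0 < T →
      T * |u 0| ≤ (∫ x in Ioc (0:ℝ) T, |u x|) + T * (∫ x in Ioc (0:ℝ) T, |u' x|) := by
    intro T hT
    have hI' : IntegrableOn (fun x => |u' x|) (Ioc 0 T) := hIocAbs T u' hT hmu' hQint
    have hI : IntegrableOn (fun x => |u x|) (Ioc 0 T) := hIocAbs T u hT hmu hPint
    set C := ∫ x in Ioc (0:ℝ) T, |u' x| with hCdef
    have hptw : ∀ b ∈ Ioc (0:ℝ) T, |u 0| ≤ |u b| + C := by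
      intro b hb
      have h1 : u b - u 0 = ∫ x in (0:ℝ)..b, u' x := hFTC 0 b le_rfl hb.1.le
      have h2 : |u 0| - |u b| ≤ |u b - u 0| := by
        have h := abs_sub_abs_le_abs_sub (u 0) (u b)
        rwa [abs_sub_comm] at h
      have h3 : |∫ x in (0:ℝ)..b, u' x| ≤ ∫ x in (0:ℝ)..b, |u' x| :=
        intervalIntegral.abs_integral_le_integral_abs hb.1.le
      have h4 : (∫ x in (0:ℝ)..b, |u' x|) = ∫ x in Ioc (0:ℝ) b, |u' x| :=
        intervalIntegral.integral_of_le hb.1.le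
      have h5 : (∫ x in Ioc (0:ℝ) b, |u' x|) ≤ C := by
        apply setIntegral_mono_set hI' ?_
          (HasSubset.Subset.eventuallyLE (Ioc_subset_Ioc_right hb.2))
        filter_upwards with x using abs_nonneg _
      rw [h1] at h2
      rw [h4] at h3
      linarith
    have hRint : IntegrableOn (fun b => |u b| + C) (Ioc 0 T) :=
      hI.add (integrableOn_const measure_Ioc_lt_top.ne)
    have hmono : (∫ _ in Ioc (0:ℝ) T, |u 0|) ≤ ∫ b in Ioc (0:ℝ) T, (|u b| + C) :=
      setIntegral_mono_on (integrableOn_const measure_Ioc_lt_top.ne)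
        hRint measurableSet_Ioc hptw
    rw [hconst T (|u 0|) hT,
      integral_add hI (integrableOn_const measure_Ioc_lt_top.ne),
      hconst T C hT] at hmono
    linarith
  -- master inequality
  have hmaster : ∀ s : ℝ, 0 < s → |u 0| ^ 4 ≤ 16 * (P2 + s) * (Q2 + s) := by
    intro s hs
    obtain ⟨a, ha, ha2⟩ : ∃ a : ℝ, 0 < a ∧ a ^ 2 = P2 + s :=
      ⟨Real.sqrt (P2 + s), Real.sqrt_pos.mpr (by linarith), Real.sq_sqrt (by linarith)⟩
    obtain ⟨b, hb, hb2⟩ : ∃ b : ℝ, 0 < b ∧ b ^ 2 = Q2 + s :=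
      ⟨Real.sqrt (Q2 + s), Real.sqrt_pos.mpr (by linarith), Real.sq_sqrt (by linarith)⟩
    obtain ⟨t, ht, ht2⟩ : ∃ t : ℝ, 0 < t ∧ t ^ 2 = a / b :=
      ⟨Real.sqrt (a / b), Real.sqrt_pos.mpr (by positivity), Real.sq_sqrt (by positivity)⟩
    have hT : (0:ℝ) < t ^ 2 := by positivity
    have hbd1 : (∫ x in Ioc (0:ℝ) (t^2), |u x|) ≤ (t / a * a ^ 2 + t ^ 2 / (t / a)) / 2 :=
      hAMGM (t^2) hT u hmu hPint (a^2) (by rw [ha2, hP2def.symm] at *; linarith) (t/a) (by positivity)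
    have hbd2 : (∫ x in Ioc (0:ℝ) (t^2), |u' x|) ≤ (t / b * b ^ 2 + t ^ 2 / (t / b)) / 2 :=
      hAMGM (t^2) hT u' hmu' hQint (b^2) (by rw [hb2, hQ2def.symm] at *; linarith) (t/b) (by positivity)
    have he1 : (t / a * a ^ 2 + t ^ 2 / (t / a)) / 2 = t * a := by
      field_simp; ring
    have he2 : (t / b * b ^ 2 + t ^ 2 / (t / b)) / 2 = t * b := by
      field_simp; ring
    rw [he1] at hbd1; rw [he2] at hbd2
    have htr := htrace (t^2) hT
    have hkey : t ^ 2 * |u 0| ≤ t * a + t ^ 2 * (t * b) := by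
      calc t ^ 2 * |u 0| ≤ (∫ x in Ioc (0:ℝ) (t^2), |u x|)
            + t ^ 2 * (∫ x in Ioc (0:ℝ) (t^2), |u' x|) := htr
      _ ≤ t * a + t ^ 2 * (t * b) := by
          have := mul_le_mul_of_nonneg_left hbd2 (le_of_lt hT)
          linarith
    have htb : t ^ 2 * b = a := by
      rw [ht2]; exact div_mul_cancel₀ a hb.ne'
    have hkey2 : t * |u 0| ≤ 2 * a := by
      have h : t * (t * |u 0|) ≤ t * (2 * a) := by
        have e1 : t ^ 2 * (t * b) = t * (t ^ 2 * b) := by ring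
        rw [e1, htb] at hkey
        have e2 : t * (t * |u 0|) = t ^ 2 * |u 0| := by ring
        rw [e2]; linarith
      exact le_of_mul_le_mul_left h ht
    have hsq : t ^ 2 * |u 0| ^ 2 ≤ 4 * a ^ 2 := by
      have h := mul_self_le_mul_self (mul_nonneg ht.le (abs_nonneg (u 0))) hkey2
      linarith [h]
    have h8 : a * |u 0| ^ 2 ≤ 4 * a ^ 2 * b := by
      have h := mul_le_mul_of_nonneg_right hsq hb.le
      calc a * |u 0| ^ 2 = t ^ 2 * b * |u 0| ^ 2 := by rw [htb]
      _ = (t ^ 2 * |u 0| ^ 2) * b := by ring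
      _ ≤ (4 * a ^ 2) * b := h
      _ = 4 * a ^ 2 * b := by ring
    have h7 : |u 0| ^ 2 ≤ 4 * (a * b) := by
      have h : a * |u 0| ^ 2 ≤ a * (4 * (a * b)) := by linarith [h8]
      exact le_of_mul_le_mul_left h ha
    have h9 := mul_self_le_mul_self (sq_nonneg (u 0) |>.trans_eq (sq_abs (u 0)).symm |>.trans_eq rfl) h7
    have h9' : (|u 0| ^ 2) * (|u 0| ^ 2) ≤ (4 * (a * b)) * (4 * (a * b)) :=
      mul_self_le_mul_self (sq_nonneg _) h7
    calc |u 0| ^ 4 = (|u 0| ^ 2) * (|u 0| ^ 2) := by ring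
    _ ≤ (4 * (a * b)) * (4 * (a * b)) := h9'
    _ = 16 * (a ^ 2) * (b ^ 2) := by ring
    _ = 16 * (P2 + s) * (Q2 + s) := by rw [ha2, hb2]
  -- pass to the limit s → 0
  have h16 : |u 0| ^ 4 ≤ 16 * P2 * Q2 := by
    apply le_of_forall_pos_le_add
    intro ε hε
    have hD : (0:ℝ) < 16 * (P2 + Q2 + 1) + 1 := by positivity
    obtain ⟨s, hs, hs1, hsD⟩ :
        ∃ s : ℝ, 0 < s ∧ s ≤ 1 ∧ s * (16 * (P2 + Q2 + 1) + 1) ≤ ε := by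
      refine ⟨min 1 (ε / (16 * (P2 + Q2 + 1) + 1)),
        lt_min one_pos (by positivity), min_le_left _ _, ?_⟩
      exact (le_div_iff₀ hD).mp (min_le_right _ _)
    have hb := hmaster s hs
    have hss : s * s ≤ s * 1 := mul_le_mul_of_nonneg_left hs1 hs.le
    nlinarith [hb, hss, hsD, mul_nonneg hs.le hP2nn, mul_nonneg hs.le hQ2nn, hs]
  -- conclude
  refine ⟨hu0, ?_⟩
  have hMA : |u 0| ^ 4 ≤ massg u * A := by
    have : 16 * P2 * Q2 = (4 * P2) * (4 * Q2) := by ring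
    rw [this] at h16
    refine le_trans h16 (mul_le_mul h4P2 h4Q2 (by linarith) ?_)
    linarith
  have hfin : |u 0| ^ 4 ≤ 2 * (α / q) * |u 0| ^ q * μ := by
    calc |u 0| ^ 4 ≤ massg u * A := hMA
    _ ≤ μ * A := mul_le_mul_of_nonneg_right hm hAnn
    _ ≤ μ * (2 * (α / q) * |u 0| ^ q) := mul_le_mul_of_nonneg_left hAlt.le hμ.le
    _ = 2 * (α / q) * |u 0| ^ q * μ := by ring
  have hBpos : 0 < |u 0| ^ q := Real.rpow_pos_of_pos habs q
  have hsplit : |u 0| ^ (4 - q) * |u 0| ^ q = |u 0| ^ 4 := by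
    have e : (4:ℝ) - q + q = ((4:ℕ):ℝ) := by norm_num
    rw [← Real.rpow_add habs, e, Real.rpow_natCast]
  have hle : |u 0| ^ (4 - q) * |u 0| ^ q ≤ (2 * (α / q) * μ) * |u 0| ^ q := by
    rw [hsplit]; linarith [hfin]
  have h1 : |u 0| ^ (4 - q) ≤ 2 * (α / q) * μ :=
    le_of_mul_le_mul_right hle hBpos
  have : 2 * (α / q) * μ ≤ 8 * α / q * μ := by
    have hx : 0 < α / q * μ := mul_pos (div_pos hα hq0) hμ
    have e : 8 * α / q * μ = 8 * (α / q * μ) := by ring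
    have e2 : 2 * (α / q) * μ = 2 * (α / q * μ) := by ring
    rw [e, e2]; linarith
  linarith
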